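/- Let A be a C*-algebra, n ≥ 1, and J_1, …, J_n closed two-sided ideals of A with ⋂_i J_i = {0}; write q_i : A → A/J_i for the quotient map and K_{ij} = J_i + J_j. For each i let E_i be a right Hilbert C*-module over the C*-algebra A/J_i (so E_i is an A-module via q_i), and write E_i|_{ij} for the quotient normed module E_i / closure(E_i·q_i(K_{ij})). Suppose given, for each ordered pair (i,j), a surjective A-linear isometry ζ_{ij} : E_j|_{ij} → E_i|_{ij} which is unitary in the following sense: whenever z, z′ ∈ E_j and w, w′ ∈ E_i are such that the class of w in E_i|_{ij} equals ζ_{ij}(class of z) and the class of w′ equals ζ_{ij}(class of z′), then the images of ⟨w|w′⟩ ∈ A/J_i and of ⟨z|z′⟩ ∈ A/J_j in A/K_{ij} coincide. Let G := {(z_i)_i ∈ Π_i E_i : for all (i,j), the class of z_i in E_i|_{ij} equals ζ_{ij}(class of z_j in E_j|_{ij})}. Then: (a) G is a closed A-submodule of Π_i E_i (with the componentwise A-module structure via the q_i); (b) for all z = (z_i), z′ = (z′_i) ∈ G there is a unique element ⟨z|z′⟩_A ∈ A satisfying ⟨z|z′⟩_A + J_i = ⟨z_i|z′_i⟩ in A/J_i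 for every i; and (c) with this A-valued inner product, G is a right Hilbert C*-module over A whose norm coincides with the supremum norm ‖(z_i)_i‖ = max_i ‖z_i‖. -/

import Mathlib

/-!
STATEMENT 5 (gluing Hilbert modules: the glued module is a Hilbert module).

`A` a C*-algebra, `J 1, …, J n` closed two-sided ideals with trivial
intersection.  The quotient C*-algebras `A/J i` are presented as C*-algebras
`B i` together with surjective *-homomorphisms `q i : A → B i` with kernel
`J i` (such a presentation determines `B i` up to isometric *-isomorphism with
`A/J i`).  `E i` is a right Hilbert C*-module over `B i` (hence an `A`-module
via `q i`), and `E i |_{ij}` is the quotient of `E i` by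
`closure (span {e <• (q i c) : c ∈ J i ⊔ J j})`; a map between such quotients
is encoded by its graph on representatives: `ζ i j z w` means
"`ζ_{ij}(class of z) = class of w` in `E i |_{ij}`".  `IsGluingDatum` below
records that each `ζ i j` is (the graph of) a well-defined surjective
`A`-linear isometry `E j |_{ij} → E i |_{ij}` which is unitary (compatible
with the `B i`- and `B j`-valued inner products after mapping to `A/(J i ⊔ J j)`).

Conclusion, for the glued set
`G = {(z i)_i : ∀ i j, class (z i) = ζ_{ij} (class (z j))}` inside `Π i, E i`
(carrying the supremum norm):
(a) `G` is a closed `A`-submodule of `Π i, E i`;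
(b) for `z, z' ∈ G` there is a unique `a ∈ A` with `q i a = ⟪z i, z' i⟫` for all `i`;
(c) this pairing makes `G` a right Hilbert C*-module over `A`: it is hermitian,
additive, `A`-linear, positive (`= star b * b`), definite, and its induced norm
`√‖⟪z,z⟫_A‖` coincides with the supremum norm, i.e. `‖⟪z,z⟫_A‖ = ‖z‖ ^ 2`
(completeness holds since `G` is closed in the complete space `Π i, E i`).
-/

open Metric Filter Topology
open scoped RightActions

/-- The December-2024 Mathlib `CStarModule` (right module, `SMul Aᵐᵒᵖ E`), restated verbatim:
current Mathlib's `CStarModule` is now a left-module notion with another axiom. -/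
class RightCStarModule (A E : Type*) [NonUnitalSemiring A] [StarRing A] [Module ℂ A]
    [AddCommGroup E] [Module ℂ E] [PartialOrder A] [SMul Aᵐᵒᵖ E] [Norm A] [Norm E]
    extends Inner A E where
  inner_add_right {x} {y} {z} : inner x (y + z) = inner x y + inner x z
  inner_self_nonneg {x} : 0 ≤ inner x x
  inner_self {x} : inner x x = 0 ↔ x = 0
  inner_op_smul_right {a : A} {x y : E} : inner x (y <• a) = inner x y * a
  inner_smul_right_complex {z : ℂ} {x} {y} : inner x (z • y) = z • inner x y
  star_inner x y : star (inner x y) = inner y x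
  norm_eq_sqrt_norm_inner_self x : ‖x‖ = √‖inner x x‖

/-- `E·q(S)`: the closed `ℂ`-linear span of `{e <• q c : c ∈ S, e ∈ E}` in `E`. -/
noncomputable def resIdealSpan {A B : Type*} [NonUnitalCStarAlgebra A] [NonUnitalCStarAlgebra B]
    (E : Type*) [NormedAddCommGroup E] [Module ℂ E] [SMul Bᵐᵒᵖ E]
    (q : A →⋆ₙₐ[ℂ] B) (S : Set A) : Set E :=
  closure (Submodule.span ℂ {z : E | ∃ c ∈ S, ∃ e : E, z = e <• q c} : Set E)

/-- A gluing datum for Hilbert modules over the ideals `J i`: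
each `ζ i j` is the graph of a surjective `A`-linear unitary isometry
`E j |_{ij} → E i |_{ij}`. -/
structure IsGluingDatum {A : Type*} [NonUnitalCStarAlgebra A] {n : ℕ}
    (J : Fin n → TwoSidedIdeal A)
    {B : Fin n → Type*} [∀ i, NonUnitalCStarAlgebra (B i)]
    [∀ i, PartialOrder (B i)] [∀ i, StarOrderedRing (B i)]
    (q : ∀ i, A →⋆ₙₐ[ℂ] B i)
    {E : Fin n → Type*} [∀ i, NormedAddCommGroup (E i)] [∀ i, Module ℂ (E i)]
    [∀ i, SMul (B i)ᵐᵒᵖ (E i)] [∀ i, RightCStarModule (B i) (E i)]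
    (ζ : ∀ i j, E j → E i → Prop) : Prop where
  /-- every class has an image (totality of the graph) -/
  total : ∀ i j (z : E j), ∃ w : E i, ζ i j z w
  /-- the graph only depends on the classes mod `E·q(J i ⊔ J j)` -/
  resp : ∀ i j (z z' : E j) (w w' : E i), ζ i j z w →
    z' - z ∈ resIdealSpan (E j) (q j) ((J i ⊔ J j : TwoSidedIdeal A) : Set A) →
    w' - w ∈ resIdealSpan (E i) (q i) ((J i ⊔ J j : TwoSidedIdeal A) : Set A) →
    ζ i j z' w'
  /-- the image class is well defined (functionality of the graph) -/
  func : ∀ i j (z : E j) (w w' : E i), ζ i j z w → ζ i j z w' →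
    w - w' ∈ resIdealSpan (E i) (q i) ((J i ⊔ J j : TwoSidedIdeal A) : Set A)
  /-- additivity -/
  add : ∀ i j (z z' : E j) (w w' : E i), ζ i j z w → ζ i j z' w' → ζ i j (z + z') (w + w')
  /-- `A`-linearity -/
  smulA : ∀ i j (a : A) (z : E j) (w : E i), ζ i j z w → ζ i j (z <• q j a) (w <• q i a)
  /-- isometry for the quotient norms -/
  isometry : ∀ i j (z : E j) (w : E i), ζ i j z w →
    infDist w (resIdealSpan (E i) (q i) ((J i ⊔ J j : TwoSidedIdeal A) : Set A)) =
      infDist z (resIdealSpan (E j) (q j) ((J i ⊔ J j : TwoSidedIdeal A) : Set A))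
  /-- surjectivity -/
  surj : ∀ i j (w : E i), ∃ z : E j, ζ i j z w
  /-- unitarity: `ζ i j` intertwines the inner products modulo `J i ⊔ J j`. -/
  unitary : ∀ i j (z z' : E j) (w w' : E i), ζ i j z w → ζ i j z' w' →
    ∀ a a' : A, q i a = (inner (B i) w w' : B i) → q j a' = (inner (B j) z z' : B j) →
      a - a' ∈ J i ⊔ J j

section RightCStarModuleAux

namespace RightCStarModule

variable {A E : Type*} [NonUnitalCStarAlgebra A] [PartialOrder A] [NormedAddCommGroup E]
  [Module ℂ E] [SMul Aᵐᵒᵖ E] [RightCStarModule A E]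

lemma inner_add_left {x y z : E} : inner A (x + y) z = inner A x z + inner A y z := by
  rw [← RightCStarModule.star_inner (A := A) z (x + y), RightCStarModule.inner_add_right, star_add,
    RightCStarModule.star_inner, RightCStarModule.star_inner]

lemma inner_op_smul_left {a : A} {x y : E} : inner A (x <• a) y = star a * inner A x y := by
  rw [← RightCStarModule.star_inner (A := A) y (x <• a), RightCStarModule.inner_op_smul_right,
    star_mul, RightCStarModule.star_inner]

lemma inner_smul_left_complex {z : ℂ} {x y : E} : inner A (z • x) y = star z • inner A x y := by
  rw [← RightCStarModule.star_inner (A := A) y (z • x), RightCStarModule.inner_smul_right_complex,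
    star_smul, RightCStarModule.star_inner]

lemma inner_neg_right {x y : E} : inner A x (-y) = -inner A x y := by
  have h : -y = (-1 : ℂ) • y := (neg_one_smul ℂ y).symm
  rw [h, RightCStarModule.inner_smul_right_complex, neg_one_smul]

lemma inner_neg_left {x y : E} : inner A (-x) y = -inner A x y := by
  rw [← RightCStarModule.star_inner (A := A) y (-x), inner_neg_right, star_neg,
    RightCStarModule.star_inner]

lemma inner_sub_right {x y z : E} : inner A x (y - z) = inner A x y - inner A x z := by
  rw [sub_eq_add_neg, RightCStarModule.inner_add_right, inner_neg_right, ← sub_eq_add_neg]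

lemma inner_sub_left {x y z : E} : inner A (x - y) z = inner A x z - inner A y z := by
  rw [sub_eq_add_neg, inner_add_left, inner_neg_left, ← sub_eq_add_neg]

@[simp]
lemma inner_zero_right {x : E} : inner A x (0 : E) = 0 := by
  rw [← zero_smul ℂ (0 : E), RightCStarModule.inner_smul_right_complex, zero_smul]

@[simp]
lemma inner_zero_left {x : E} : inner A (0 : E) x = 0 := by
  rw [← RightCStarModule.star_inner (A := A) x (0 : E), inner_zero_right, star_zero]

lemma isSelfAdjoint_inner_self {x : E} : IsSelfAdjoint (inner A x x) :=
  RightCStarModule.star_inner x x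

lemma norm_sq_eq {x : E} : ‖x‖ ^ 2 = ‖inner A x x‖ := by
  rw [RightCStarModule.norm_eq_sqrt_norm_inner_self (A := A) x, Real.sq_sqrt (norm_nonneg _)]

end RightCStarModule

end RightCStarModuleAux

section AuxCStar

/-! ### Auxiliary C*-algebra facts -/

lemma spec_abs_le' {B : Type*} [NonUnitalCStarAlgebra B] {x : B} {t : ℝ}
    (ht : t ∈ quasispectrum ℝ x) : |t| ≤ ‖x‖ := by
  rw [Unitization.quasispectrum_eq_spectrum_inr' ℝ ℂ] at ht
  simpa [Unitization.norm_inr] using spectrum.norm_le_norm_of_mem ht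

/-- the cutoff function `t ↦ min (t²/δ) 1`. -/
noncomputable def gfun (δ : ℝ) : ℝ → ℝ := fun t => min (t^2/δ) 1

lemma gfun_cont (δ : ℝ) : Continuous (gfun δ) := by
  unfold gfun; fun_prop

lemma gfun_zero (δ : ℝ) : gfun δ 0 = 0 := by simp [gfun]

lemma gfun_nonneg {δ : ℝ} (hδ : 0 < δ) (t : ℝ) : 0 ≤ gfun δ t := by
  unfold gfun; positivity

lemma gfun_le_one {δ : ℝ} (t : ℝ) : gfun δ t ≤ 1 := min_le_right _ _

lemma gfun_bound {δ : ℝ} (hδ : 0 < δ) (t : ℝ) :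
    |t * (1 - gfun δ t)^2| ≤ Real.sqrt δ := by
  rcases le_or_gt (t^2) δ with h | h
  · have h1 : |t| ≤ Real.sqrt δ := Real.abs_le_sqrt h
    have h2 : 0 ≤ gfun δ t := gfun_nonneg hδ t
    have h3 : gfun δ t ≤ 1 := gfun_le_one t
    have h4 : (1 - gfun δ t)^2 ≤ 1 := by nlinarith
    calc |t * (1 - gfun δ t)^2| = |t| * (1 - gfun δ t)^2 := by
          rw [abs_mul, abs_pow, sq_abs]
      _ ≤ |t| * 1 := by nlinarith [abs_nonneg t]
      _ ≤ Real.sqrt δ := by simpa using h1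
  · have : gfun δ t = 1 := min_eq_right (by rw [le_div_iff₀ hδ]; nlinarith)
    simp [this, Real.sqrt_nonneg]

/-- the truncation function used for the quotient-norm lemma. -/
noncomputable def ffun (β : ℝ) : ℝ → ℝ := fun t => 1 - β^2 / max |t| (β^2)

lemma ffun_cont {β : ℝ} (hβ : 0 < β) : Continuous (ffun β) := by
  have h : ∀ t : ℝ, max |t| (β^2) ≠ 0 := fun t =>
    ne_of_gt (lt_max_of_lt_right (by positivity))
  unfold ffun
  exact continuous_const.sub (continuous_const.div
    ((continuous_abs).max continuous_const) h)

lemma ffun_eq_zero {β t : ℝ} (hβ : 0 < β) (ht : |t| ≤ β^2) : ffun β t = 0 := by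
  unfold ffun
  rw [max_eq_right ht, div_self (by positivity)]
  ring

lemma ffun_zero {β : ℝ} (hβ : 0 < β) : ffun β 0 = 0 :=
  ffun_eq_zero hβ (by simp; positivity)

lemma ffun_bound {β : ℝ} (hβ : 0 < β) (t : ℝ) :
    |t * (1 - ffun β t)^2| ≤ β^2 := by
  set M := max |t| (β^2) with hM
  have hM0 : 0 < M := lt_max_of_lt_right (by positivity)
  have h1 : 1 - ffun β t = β^2 / M := by unfold ffun; rw [← hM]; ring
  have h2 : |t| ≤ M := le_max_left _ _
  have h3 : β^2 ≤ M := le_max_right _ _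
  have h4 : |t * (1 - ffun β t)^2| = |t| * (β^2/M)^2 := by
    rw [abs_mul, abs_pow, h1, abs_div, abs_of_nonneg (sq_nonneg β),
      abs_of_pos hM0]
  rw [h4, div_pow, ← mul_div_assoc, div_le_iff₀ (by positivity)]
  calc |t| * (β^2)^2 ≤ M * (β^2)^2 := by nlinarith [sq_nonneg (β^2), abs_nonneg t]
    _ = (β^2 * β^2) * M := by ring
    _ ≤ (β^2 * M) * M := by
        nlinarith [mul_le_mul_of_nonneg_right h3 (mul_nonneg (sq_nonneg β) hM0.le)]
    _ = β^2 * M^2 := by ring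

lemma cfc_conj_identity {B : Type*} [NonUnitalCStarAlgebra B] (s : B) (hs : IsSelfAdjoint s)
    (f : ℝ → ℝ) (hf : Continuous f) (hf0 : f 0 = 0) :
    s - s * cfcₙ f s - cfcₙ f s * s + cfcₙ f s * (s * cfcₙ f s)
      = cfcₙ (fun t => t * (1 - f t)^2) s := by
  have hid : cfcₙ (fun t : ℝ => t) s = s := cfcₙ_id' ℝ s
  rw [show (fun t : ℝ => t * (1 - f t)^2) = fun t : ℝ =>
      (t - t * f t - f t * t) + f t * (t * f t) from by funext t; ring]
  have e1 := cfcₙ_add (a := s) (f := fun t : ℝ => t - t*f t - f t*t)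
    (g := fun t : ℝ => f t*(t*f t)) (hf := by fun_prop) (hf0 := by simp [hf0])
    (hg := by fun_prop) (hg0 := by simp [hf0])
  have e2 := cfcₙ_sub (a := s) (f := fun t : ℝ => t - t*f t)
    (g := fun t : ℝ => f t*t) (hf := by fun_prop) (hf0 := by simp [hf0])
    (hg := by fun_prop) (hg0 := by simp [hf0])
  have e3 := cfcₙ_sub (a := s) (f := fun t : ℝ => t)
    (g := fun t : ℝ => t * f t) (hf := by fun_prop) (hf0 := by simp)
    (hg := by fun_prop) (hg0 := by simp)
  have e4 := cfcₙ_mul (a := s) (f := fun t : ℝ => t)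
    (g := f) (hf := by fun_prop) (hf0 := by simp)
    (hg := hf.continuousOn) (hg0 := hf0)
  have e5 := cfcₙ_mul (a := s) (f := f)
    (g := fun t : ℝ => t) (hf := hf.continuousOn) (hf0 := hf0)
    (hg := by fun_prop) (hg0 := by simp)
  have e6 := cfcₙ_mul (a := s) (f := f)
    (g := fun t : ℝ => t * f t) (hf := hf.continuousOn) (hf0 := hf0)
    (hg := by fun_prop) (hg0 := by simp [hf0])
  rw [e1, e2, e3, e4, e5, e6, e4, hid]

lemma mul_approx {B : Type*} [NonUnitalCStarAlgebra B] (c : B) (f : ℝ → ℝ)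
    (hf : Continuous f) (hf0 : f 0 = 0) {M : ℝ} (hM : ∀ t, |t * (1 - f t)^2| ≤ M) :
    ‖c - c * cfcₙ f (star c * c)‖ ^ 2 ≤ M := by
  set s := star c * c with hs
  have hssa : IsSelfAdjoint s := IsSelfAdjoint.star_mul_self c
  set m := cfcₙ f s with hm
  have hmsa : IsSelfAdjoint m := cfcₙ_predicate f s
  have h1 : ‖c - c * m‖^2 = ‖star (c - c*m) * (c - c*m)‖ := by
    rw [CStarRing.norm_star_mul_self]; ring
  have h2 : star (c - c*m) * (c - c*m) = s - s * m - m * s + m * (s * m) := by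
    rw [star_sub, star_mul, hmsa.star_eq, hs]; noncomm_ring
  rw [h1, h2, cfc_conj_identity s hssa f hf hf0]
  exact norm_cfcₙ_le fun t _ => by rw [Real.norm_eq_abs]; exact hM t

lemma conj_nonneg {B : Type*} [NonUnitalCStarAlgebra B] [PartialOrder B] [StarOrderedRing B]
    {b u : B} (hb : 0 ≤ b) (hu : IsSelfAdjoint u) :
    0 ≤ b - b * u - u * b + u * (b * u) := by
  rw [StarOrderedRing.nonneg_iff] at hb
  induction hb using AddSubmonoid.closure_induction with
  | mem x hx =>
    obtain ⟨s, rfl⟩ := hx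
    have h : star s * s - (star s * s) * u - u * (star s * s) + u * ((star s * s) * u)
        = star (s - s * u) * (s - s * u) := by
      rw [star_sub, star_mul, hu.star_eq]; noncomm_ring
    rw [h]; exact star_mul_self_nonneg _
  | zero => simp
  | add x y hx hy hx' hy' =>
    have h : (x + y) - (x + y) * u - u * (x + y) + u * ((x + y) * u)
        = (x - x * u - u * x + u * (x * u)) + (y - y * u - u * y + u * (y * u)) := by
      noncomm_ring
    rw [h]; exact add_nonneg hx' hy'

lemma key_smul_approx {B E : Type*} [NonUnitalCStarAlgebra B] [PartialOrder B]
    [StarOrderedRing B] [NormedAddCommGroup E] [Module ℂ E] [SMul Bᵐᵒᵖ E] [RightCStarModule B E]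
    (z : E) (H : B) (hH : 0 ≤ H) (hle : (inner B z z : B) * inner B z z ≤ H) {δ : ℝ} (hδ : 0 < δ) :
    ‖z - z <• cfcₙ (gfun δ) H‖ ^ 2 ≤ 2 * Real.sqrt (Real.sqrt δ) := by
  set p : B := inner B z z with hp
  have hpsa : IsSelfAdjoint p := RightCStarModule.isSelfAdjoint_inner_self
  have hHsa : IsSelfAdjoint H := .of_nonneg hH
  set u := cfcₙ (gfun δ) H with hu
  have husa : IsSelfAdjoint u := cfcₙ_predicate _ H
  have hu1 : ‖u‖ ≤ 1 := norm_cfcₙ_le fun t _ => by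
    rw [Real.norm_eq_abs, abs_of_nonneg (gfun_nonneg hδ t)]; exact gfun_le_one t
  set x := p - p * u with hx
  have hxsq : ‖x‖^2 = ‖p*p - (p*p)*u - u*(p*p) + u*((p*p)*u)‖ := by
    have h2 : star x * x = p*p - (p*p)*u - u*(p*p) + u*((p*p)*u) := by
      rw [hx, star_sub, star_mul, husa.star_eq, hpsa.star_eq]; noncomm_ring
    rw [← h2, CStarRing.norm_star_mul_self]; ring
  have hnn : (0:B) ≤ p*p - (p*p)*u - u*(p*p) + u*((p*p)*u) := by
    have : (0:B) ≤ p * p := by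
      nth_rw 1 [← hpsa.star_eq]; exact star_mul_self_nonneg p
    exact conj_nonneg this husa
  have hmono : p*p - (p*p)*u - u*(p*p) + u*((p*p)*u) ≤ H - H*u - u*H + u*(H*u) := by
    have h0 : (0:B) ≤ (H - p*p) - (H - p*p)*u - u*(H - p*p) + u*((H - p*p)*u) :=
      conj_nonneg (sub_nonneg.2 hle) husa
    have h1 : (H - p*p) - (H - p*p)*u - u*(H - p*p) + u*((H - p*p)*u)
        = (H - H*u - u*H + u*(H*u)) - (p*p - (p*p)*u - u*(p*p) + u*((p*p)*u)) := by
      noncomm_ring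
    rw [h1] at h0; exact sub_nonneg.mp h0
  have hcfc : H - H*u - u*H + u*(H*u) = cfcₙ (fun t => t * (1 - gfun δ t)^2) H :=
    cfc_conj_identity H hHsa _ (gfun_cont δ) (gfun_zero δ)
  have hxle : ‖x‖^2 ≤ Real.sqrt δ := by
    rw [hxsq]
    calc ‖p*p - (p*p)*u - u*(p*p) + u*((p*p)*u)‖ ≤ ‖H - H*u - u*H + u*(H*u)‖ :=
          CStarAlgebra.norm_le_norm_of_nonneg_of_le hnn hmono
      _ ≤ Real.sqrt δ := by
          rw [hcfc]
          exact norm_cfcₙ_le fun t _ => by rw [Real.norm_eq_abs]; exact gfun_bound hδ t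
  have hxle' : ‖x‖ ≤ Real.sqrt (Real.sqrt δ) := by
    have := Real.sqrt_le_sqrt hxle
    rwa [Real.sqrt_sq (norm_nonneg x)] at this
  have hinner : (inner B (z - z <• u) (z - z <• u) : B) = x - u * x := by
    simp only [RightCStarModule.inner_sub_right, RightCStarModule.inner_sub_left,
      RightCStarModule.inner_op_smul_right, RightCStarModule.inner_op_smul_left, ← hp, husa.star_eq, hx]
    noncomm_ring
  have hns : ‖z - z <• u‖^2 = ‖x - u * x‖ := by
    rw [RightCStarModule.norm_sq_eq (A := B), hinner]
  rw [hns]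
  calc ‖x - u*x‖ ≤ ‖x‖ + ‖u*x‖ := norm_sub_le _ _
    _ ≤ ‖x‖ + ‖u‖ * ‖x‖ := by linarith [norm_mul_le u x]
    _ ≤ ‖x‖ + 1 * ‖x‖ := by nlinarith [norm_nonneg x]
    _ = 2 * ‖x‖ := by ring
    _ ≤ 2 * Real.sqrt (Real.sqrt δ) := by linarith

lemma cfcn_zero_of {B : Type*} [NonUnitalCStarAlgebra B] (f : ℝ → ℝ) (hf0 : f 0 = 0) :
    cfcₙ f (0 : B) = 0 := by
  by_cases hf : ContinuousOn f (quasispectrum ℝ (0 : B))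
  · calc cfcₙ f (0 : B) = cfcₙ (fun _ : ℝ => (0:ℝ)) (0:B) := by
          apply cfcₙ_congr
          intro t htt
          rw [CFC.quasispectrum_zero_eq] at htt
          simp only [Set.mem_singleton_iff] at htt
          simp [htt, hf0]
      _ = 0 := by simp
  · exact cfcₙ_apply_of_not_continuousOn _ hf

lemma nsahom_continuous {A B : Type*} [NonUnitalCStarAlgebra A] [NonUnitalCStarAlgebra B]
    (φ : A →⋆ₙₐ[ℂ] B) : Continuous φ :=
  AddMonoidHomClass.continuous_of_bound φ 1 (fun a => by
    simpa using NonUnitalStarAlgHom.norm_apply_le φ a)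

/-- The key quotient-norm lemma: the distance from `v` to `ker φ` is at most `‖φ v‖`. -/
lemma exists_ker_dist_le {A B : Type*} [NonUnitalCStarAlgebra A] [NonUnitalCStarAlgebra B]
    (φ : A →⋆ₙₐ[ℂ] B) (v : A) : ∃ d : A, φ d = 0 ∧ ‖v - d‖ ≤ ‖φ v‖ := by
  by_cases hβ : ‖φ v‖ = 0
  · exact ⟨v, by rw [← norm_eq_zero]; exact hβ, by simp⟩
  have hβ0 : 0 < ‖φ v‖ := lt_of_le_of_ne (norm_nonneg _) (Ne.symm hβ)
  set β := ‖φ v‖ with hβdef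
  have hssa : IsSelfAdjoint (star v * v) := .star_mul_self v
  refine ⟨v * cfcₙ (ffun β) (star v * v), ?_, ?_⟩
  · have h1 : φ (cfcₙ (ffun β) (star v * v)) = cfcₙ (ffun β) (star (φ v) * φ v) := by
      rw [← map_star, ← map_mul]
      exact NonUnitalStarAlgHom.map_cfcₙ φ (ffun β) (star v * v)
        ((ffun_cont hβ0).continuousOn) (ffun_zero hβ0) (nsahom_continuous φ) hssa (hssa.map φ)
    have h2 : cfcₙ (ffun β) (star (φ v) * φ v) = 0 := by
      calc cfcₙ (ffun β) (star (φ v) * φ v)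
          = cfcₙ (fun _ : ℝ => (0:ℝ)) (star (φ v) * φ v) := by
            apply cfcₙ_congr
            intro t htt
            have hb := spec_abs_le' htt
            rw [CStarRing.norm_star_mul_self] at hb
            exact ffun_eq_zero hβ0 (by rw [hβdef]; nlinarith [hb])
        _ = 0 := by simp
    rw [map_mul, h1, h2, mul_zero]
  · have := mul_approx v (ffun β) (ffun_cont hβ0) (ffun_zero hβ0) (fun t => ffun_bound hβ0 t)
    nlinarith [norm_nonneg (v - v * cfcₙ (ffun β) (star v * v))]

lemma smul_op_smul_comm' {B E : Type*} [NonUnitalCStarAlgebra B] [PartialOrder B]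
    [StarOrderedRing B] [NormedAddCommGroup E] [Module ℂ E] [SMul Bᵐᵒᵖ E] [RightCStarModule B E]
    (c : ℂ) (e : E) (b : B) : c • (e <• b) = e <• (c • b) := by
  have key : ∀ x : E, (inner B x (c • (e <• b) - e <• (c • b)) : B) = 0 := fun x => by
    rw [RightCStarModule.inner_sub_right, RightCStarModule.inner_smul_right_complex,
      RightCStarModule.inner_op_smul_right, RightCStarModule.inner_op_smul_right, mul_smul_comm, sub_self]
  have h0 := key (c • (e <• b) - e <• (c • b))
  rw [RightCStarModule.inner_self] at h0
  exact sub_eq_zero.mp h0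

/-- The bundled hom `A → Π i, B i`. -/
noncomputable def PiHom {A : Type*} [NonUnitalCStarAlgebra A] {n : ℕ} {B : Fin n → Type*}
    [∀ i, NonUnitalCStarAlgebra (B i)] (q : ∀ i, A →⋆ₙₐ[ℂ] B i) : A →⋆ₙₐ[ℂ] (∀ i, B i) where
  toFun a := fun i => q i a
  map_smul' c a := by funext i; simp
  map_zero' := by funext i; simp
  map_add' a b := by funext i; simp
  map_mul' a b := by funext i; simp
  map_star' a := by funext i; simp [Pi.star_def, map_star]

end AuxCStar

set_option maxHeartbeats 8000000 in
theorem statement5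
    {A : Type*} [NonUnitalCStarAlgebra A]
    (n : ℕ) (hn : 1 ≤ n)
    (J : Fin n → TwoSidedIdeal A)
    (hJclosed : ∀ i, IsClosed ((J i : Set A)))
    (hJinter : ∀ a : A, (∀ i, a ∈ J i) → a = 0)
    -- the quotient C*-algebras `B i = A / J i`:
    {B : Fin n → Type*} [∀ i, NonUnitalCStarAlgebra (B i)]
    [∀ i, PartialOrder (B i)] [∀ i, StarOrderedRing (B i)]
    (q : ∀ i, A →⋆ₙₐ[ℂ] B i)
    (hq_surj : ∀ i, Function.Surjective (q i))
    (hq_ker : ∀ i (a : A), q i a = 0 ↔ a ∈ J i)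
    -- the Hilbert modules `E i` over `B i`:
    {E : Fin n → Type*} [∀ i, NormedAddCommGroup (E i)] [∀ i, Module ℂ (E i)]
    [∀ i, SMul (B i)ᵐᵒᵖ (E i)] [∀ i, RightCStarModule (B i) (E i)] [∀ i, CompleteSpace (E i)]
    -- the gluing maps:
    (ζ : ∀ i j, E j → E i → Prop)
    (hζ : IsGluingDatum J q ζ) :
    -- (a) the glued set `G` is a closed `A`-submodule of `Π i, E i`:
    ((0 : ∀ i, E i) ∈ {z : ∀ i, E i | ∀ i j, ζ i j (z j) (z i)} ∧
      (∀ z w : ∀ i, E i, (∀ i j, ζ i j (z j) (z i)) → (∀ i j, ζ i j (w j) (w i)) →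
        (∀ i j, ζ i j ((z + w) j) ((z + w) i))) ∧
      (∀ z : ∀ i, E i, (∀ i j, ζ i j (z j) (z i)) → (∀ i j, ζ i j ((-z) j) ((-z) i))) ∧
      (∀ z : ∀ i, E i, (∀ i j, ζ i j (z j) (z i)) → ∀ c : ℂ,
        (∀ i j, ζ i j ((c • z) j) ((c • z) i))) ∧
      (∀ z : ∀ i, E i, (∀ i j, ζ i j (z j) (z i)) → ∀ a : A,
        (∀ i j, ζ i j ((z j) <• q j a) ((z i) <• q i a))) ∧
      IsClosed {z : ∀ i, E i | ∀ i j, ζ i j (z j) (z i)}) ∧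
    -- (b) existence and uniqueness of the `A`-valued inner product:
    (∀ z z' : ∀ i, E i, (∀ i j, ζ i j (z j) (z i)) → (∀ i j, ζ i j (z' j) (z' i)) →
      ∃! a : A, ∀ i, q i a = (inner (B i) (z i) (z' i) : B i)) ∧
    -- (c) with this inner product `G` is a Hilbert `A`-module with the sup norm:
    (∃ P : (∀ i, E i) → (∀ i, E i) → A,
      (∀ z z' : ∀ i, E i, (∀ i j, ζ i j (z j) (z i)) → (∀ i j, ζ i j (z' j) (z' i)) →
        ∀ i, q i (P z z') = (inner (B i) (z i) (z' i) : B i)) ∧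
      (∀ z z' : ∀ i, E i, (∀ i j, ζ i j (z j) (z i)) → (∀ i j, ζ i j (z' j) (z' i)) →
        star (P z z') = P z' z) ∧
      (∀ z z' w : ∀ i, E i, (∀ i j, ζ i j (z j) (z i)) → (∀ i j, ζ i j (z' j) (z' i)) →
        (∀ i j, ζ i j (w j) (w i)) → P w (z + z') = P w z + P w z') ∧
      (∀ z z' : ∀ i, E i, (∀ i j, ζ i j (z j) (z i)) → (∀ i j, ζ i j (z' j) (z' i)) →
        ∀ a : A, P z (fun i => (z' i) <• q i a) = P z z' * a) ∧
      (∀ z z' : ∀ i, E i, (∀ i j, ζ i j (z j) (z i)) → (∀ i j, ζ i j (z' j) (z' i)) →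
        ∀ c : ℂ, P z (c • z') = c • P z z') ∧
      (∀ z : ∀ i, E i, (∀ i j, ζ i j (z j) (z i)) → ∃ b : A, P z z = star b * b) ∧
      (∀ z : ∀ i, E i, (∀ i j, ζ i j (z j) (z i)) → (P z z = 0 ↔ z = 0)) ∧
      (∀ z : ∀ i, E i, (∀ i j, ζ i j (z j) (z i)) → ‖P z z‖ = ‖z‖ ^ 2)) := by
  classical
  have hn0 : 0 < n := hn
  haveI : NeZero n := ⟨hn0.ne'⟩
  -- injectivity of the joint map
  have hinj : ∀ x y : A, (∀ i, q i x = q i y) → x = y := by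
    intro x y hxy
    have h : ∀ i, x - y ∈ J i := fun i =>
      (hq_ker i _).1 (by rw [map_sub, sub_eq_zero]; exact hxy i)
    exact sub_eq_zero.mp (hJinter _ h)
  have hΦinj : Function.Injective (PiHom q) :=
    fun x y hxy => hinj x y fun i => congrFun hxy i
  have hnormΦ : ∀ a : A, ‖a‖ = ‖PiHom q a‖ :=
    fun a => (NonUnitalStarAlgHom.norm_map (PiHom q) hΦinj a).symm
  -- structure of the residual subspaces
  have hSstruct : ∀ (k : Fin n) (S : Set A),
      (0:E k) ∈ resIdealSpan (E k) (q k) S ∧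
      (∀ x y : E k, x ∈ resIdealSpan (E k) (q k) S → y ∈ resIdealSpan (E k) (q k) S →
        x + y ∈ resIdealSpan (E k) (q k) S) ∧
      (∀ x : E k, x ∈ resIdealSpan (E k) (q k) S → -x ∈ resIdealSpan (E k) (q k) S) := by
    intro k S
    have h : resIdealSpan (E k) (q k) S =
        ((Submodule.span ℂ {z : E k | ∃ c ∈ S, ∃ e : E k, z = e <• q k c}).toAddSubgroup.topologicalClosure :
          Set (E k)) := rfl
    refine ⟨?_, ?_, ?_⟩
    · rw [h]; exact AddSubgroup.zero_mem _
    · intro x y hx hy; rw [h] at *; exact AddSubgroup.add_mem _ hx hy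
    · intro x hx; rw [h] at *; exact AddSubgroup.neg_mem _ hx
  -- graph manipulation lemmas
  have hG0 : ∀ i j, ζ i j 0 0 := by
    intro i j
    obtain ⟨w, hw⟩ := hζ.total i j 0
    have h2 : ζ i j 0 (w + w) := by
      have := hζ.add i j 0 0 w w hw hw
      simpa using this
    have hmem : (w + w) - w ∈ resIdealSpan (E i) (q i) ((J i ⊔ J j : TwoSidedIdeal A) : Set A) :=
      hζ.func i j 0 (w + w) w h2 hw
    have hw' : w ∈ resIdealSpan (E i) (q i) ((J i ⊔ J j : TwoSidedIdeal A) : Set A) := by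
      simpa using hmem
    refine hζ.resp i j 0 0 w 0 hw ?_ ?_
    · simpa using (hSstruct j ((J i ⊔ J j : TwoSidedIdeal A) : Set A)).1
    · have := (hSstruct i ((J i ⊔ J j : TwoSidedIdeal A) : Set A)).2.2 w hw'
      simpa using this
  have hGneg : ∀ i j (z : E j) (w : E i), ζ i j z w → ζ i j (-z) (-w) := by
    intro i j z w h
    obtain ⟨w₀, h₀⟩ := hζ.total i j (-z)
    have hadd : ζ i j 0 (w + w₀) := by
      have := hζ.add i j z (-z) w w₀ h h₀
      simpa using this
    have hmem : (w + w₀) - 0 ∈ resIdealSpan (E i) (q i) ((J i ⊔ J j : TwoSidedIdeal A) : Set A) :=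
      hζ.func i j 0 (w + w₀) 0 hadd (hG0 i j)
    rw [sub_zero] at hmem
    refine hζ.resp i j (-z) (-z) w₀ (-w) h₀ ?_ ?_
    · simpa using (hSstruct j ((J i ⊔ J j : TwoSidedIdeal A) : Set A)).1
    · have := (hSstruct i ((J i ⊔ J j : TwoSidedIdeal A) : Set A)).2.2 _ hmem
      have e : -(w + w₀) = -w - w₀ := by abel
      rw [e] at this
      exact this
  have hGsub : ∀ i j (z z' : E j) (w w' : E i), ζ i j z w → ζ i j z' w' →
      ζ i j (z - z') (w - w') := by
    intro i j z z' w w' h h'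
    have := hζ.add i j z (-z') w (-w') h (hGneg i j z' w' h')
    simpa [sub_eq_add_neg] using this
  -- closedness of the graph
  have hGC : ∀ i j (zz : E j) (ww : E i),
      (∀ ε > 0, ∃ z' w', ζ i j z' w' ∧ ‖z' - zz‖ < ε ∧ ‖w' - ww‖ < ε) → ζ i j zz ww := by
    intro i j zz ww happrox
    obtain ⟨w₁, hw₁⟩ := hζ.total i j zz
    have hSne : (resIdealSpan (E i) (q i) ((J i ⊔ J j : TwoSidedIdeal A) : Set A)).Nonempty :=
      ⟨0, (hSstruct i _).1⟩
    have hdist0 : Metric.infDist (ww - w₁)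
        (resIdealSpan (E i) (q i) ((J i ⊔ J j : TwoSidedIdeal A) : Set A)) = 0 := by
      refine le_antisymm (le_of_forall_pos_le_add fun ε hε => ?_) Metric.infDist_nonneg
      obtain ⟨z', w', hζ', hz', hw'⟩ := happrox (ε/3) (by linarith)
      have hsub : ζ i j (z' - zz) (w' - w₁) := hGsub i j z' zz w' w₁ hζ' hw₁
      have hiso := hζ.isometry i j (z' - zz) (w' - w₁) hsub
      have h1 : Metric.infDist (z' - zz)
          (resIdealSpan (E j) (q j) ((J i ⊔ J j : TwoSidedIdeal A) : Set A)) ≤ ε/3 := by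
        have := Metric.infDist_le_dist_of_mem (x := z' - zz) (hSstruct j ((J i ⊔ J j : TwoSidedIdeal A) : Set A)).1
        rw [dist_zero_right] at this
        linarith
      have h2 : Metric.infDist (ww - w₁)
          (resIdealSpan (E i) (q i) ((J i ⊔ J j : TwoSidedIdeal A) : Set A)) ≤
          Metric.infDist (w' - w₁) (resIdealSpan (E i) (q i) ((J i ⊔ J j : TwoSidedIdeal A) : Set A))
            + dist (ww - w₁) (w' - w₁) :=
        Metric.infDist_le_infDist_add_dist
      have h3 : dist (ww - w₁) (w' - w₁) < ε/3 := by
        rw [dist_eq_norm]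
        have e : (ww - w₁) - (w' - w₁) = -(w' - ww) := by abel
        rw [e, norm_neg]
        exact hw'
      rw [hiso] at h2
      linarith
    have hmem : ww - w₁ ∈ resIdealSpan (E i) (q i) ((J i ⊔ J j : TwoSidedIdeal A) : Set A) :=
      ((isClosed_closure : IsClosed (resIdealSpan (E i) (q i) ((J i ⊔ J j : TwoSidedIdeal A) : Set A))).mem_iff_infDist_zero hSne).2 hdist0
    refine hζ.resp i j zz zz w₁ ww hw₁ ?_ hmem
    · simpa using (hSstruct j ((J i ⊔ J j : TwoSidedIdeal A) : Set A)).1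
  -- norm of complex scalar action on the modules
  have hnsmul : ∀ (k : Fin n) (cc : ℂ) (x : E k), ‖cc • x‖ = ‖cc‖ * ‖x‖ := by
    intro k cc x
    have h1 : (inner (B k) (cc • x) (cc • x) : B k) = (star cc * cc) • (inner (B k) x x : B k) := by
      rw [RightCStarModule.inner_smul_left_complex, RightCStarModule.inner_smul_right_complex, smul_smul]
    rw [RightCStarModule.norm_eq_sqrt_norm_inner_self (A := B k) (x := cc • x),
        RightCStarModule.norm_eq_sqrt_norm_inner_self (A := B k) (x := x), h1, norm_smul]
    have h2 : ‖star cc * cc‖ = ‖cc‖ * ‖cc‖ := by rw [norm_mul, norm_star]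
    rw [h2, Real.sqrt_mul (mul_self_nonneg _), Real.sqrt_mul_self (norm_nonneg cc)]
  -- simultaneous approximate units
  have hAU : ∀ (i j : Fin n) (zz : E j) (ww : E i), ∀ ε > 0, ∃ u : A,
      ‖zz <• q j u - zz‖ < ε ∧ ‖ww <• q i u - ww‖ < ε := by
    intro i j zz ww ε hε
    set δ : ℝ := (ε^2/4)^4 with hδdef
    have hδ : 0 < δ := by positivity
    obtain ⟨x, hx⟩ := hq_surj j (inner (B j) zz zz : B j)
    obtain ⟨y, hy⟩ := hq_surj i (inner (B i) ww ww : B i)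
    set h : A := star x * x + star y * y with hh
    have hhsa : IsSelfAdjoint h := ((IsSelfAdjoint.star_mul_self x).add (.star_mul_self y))
    set u : A := cfcₙ (gfun δ) h with hu
    have hmap : ∀ (k : Fin n), q k u = cfcₙ (gfun δ) (q k h) := fun k =>
      NonUnitalStarAlgHom.map_cfcₙ (q k) (gfun δ) h (gfun_cont δ).continuousOn (gfun_zero δ)
        (nsahom_continuous (q k)) hhsa (hhsa.map (q k))
    have hsqrt : Real.sqrt (Real.sqrt δ) = ε^2/4 := by
      have h1 : δ = ((ε^2/4)^2)^2 := by rw [hδdef]; ring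
      rw [h1, Real.sqrt_sq (by positivity), Real.sqrt_sq (by positivity)]
    have key : ∀ (k : Fin n) (e : E k) (v r : A), q k v = (inner (B k) e e : B k) →
        (q k h) = star (q k v) * (q k v) + star (q k r) * (q k r) →
        ‖e <• q k u - e‖ < ε := by
      intro k e v r hv hform
      have hH0 : (0 : B k) ≤ q k h := by
        rw [hform]
        exact add_nonneg (star_mul_self_nonneg _) (star_mul_self_nonneg _)
      have hP : star (q k v) * (q k v) = (inner (B k) e e : B k) * (inner (B k) e e : B k) := by
        rw [hv, (RightCStarModule.isSelfAdjoint_inner_self (x := e)).star_eq]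
      have hle : (inner (B k) e e : B k) * (inner (B k) e e : B k) ≤ q k h := by
        rw [hform, hP]
        exact le_add_of_nonneg_right (star_mul_self_nonneg _)
      have hk := key_smul_approx e (q k h) hH0 hle hδ
      rw [hsqrt] at hk
      have hk2 : ‖e - e <• cfcₙ (gfun δ) (q k h)‖^2 < ε^2 := by nlinarith
      have hk3 : ‖e - e <• cfcₙ (gfun δ) (q k h)‖ < ε := by
        nlinarith [norm_nonneg (e - e <• cfcₙ (gfun δ) (q k h))]
      rw [hmap k, ← norm_neg]
      simpa using hk3
    refine ⟨u, key j zz x y hx ?_, key i ww y x hy ?_⟩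
    · rw [hh]; simp [map_star]
    · rw [hh]; simp [map_star]; rw [add_comm]
  -- complex scalars act on the graph
  have hGsmulC : ∀ i j (zj : E j) (wi : E i), ζ i j zj wi → ∀ c : ℂ,
      ζ i j (c • zj) (c • wi) := by
    intro i j zj wi h c
    apply hGC
    intro ε hε
    have hεc : 0 < ε / (‖c‖ + 1) := by positivity
    obtain ⟨u, hu1, hu2⟩ := hAU i j zj wi _ hεc
    have hfe : (‖c‖+1) * (ε/(‖c‖+1)) = ε := by field_simp
    refine ⟨zj <• q j (c • u), wi <• q i (c • u), hζ.smulA i j (c • u) zj wi h, ?_, ?_⟩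
    · rw [map_smul, ← smul_op_smul_comm', ← smul_sub, hnsmul]
      calc ‖c‖ * ‖zj <• q j u - zj‖ ≤ ‖c‖ * (ε/(‖c‖+1)) :=
            mul_le_mul_of_nonneg_left hu1.le (norm_nonneg c)
        _ < (‖c‖+1) * (ε/(‖c‖+1)) := by nlinarith [norm_nonneg c]
        _ = ε := hfe
    · rw [map_smul, ← smul_op_smul_comm', ← smul_sub, hnsmul]
      calc ‖c‖ * ‖wi <• q i u - wi‖ ≤ ‖c‖ * (ε/(‖c‖+1)) :=
            mul_le_mul_of_nonneg_left hu2.le (norm_nonneg c)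
        _ < (‖c‖+1) * (ε/(‖c‖+1)) := by nlinarith [norm_nonneg c]
        _ = ε := hfe
  -- part (a) components
  have haddG : ∀ z w : ∀ i, E i, (∀ i j, ζ i j (z j) (z i)) → (∀ i j, ζ i j (w j) (w i)) →
      (∀ i j, ζ i j ((z + w) j) ((z + w) i)) := by
    intro z w hz hw i j
    simpa using hζ.add i j (z j) (w j) (z i) (w i) (hz i j) (hw i j)
  have hnegG : ∀ z : ∀ i, E i, (∀ i j, ζ i j (z j) (z i)) →
      (∀ i j, ζ i j ((-z) j) ((-z) i)) := by
    intro z hz i j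
    simpa using hGneg i j (z j) (z i) (hz i j)
  have hsmulCG : ∀ z : ∀ i, E i, (∀ i j, ζ i j (z j) (z i)) → ∀ c : ℂ,
      (∀ i j, ζ i j ((c • z) j) ((c • z) i)) := by
    intro z hz c i j
    simpa using hGsmulC i j (z j) (z i) (hz i j) c
  have hsmulAG : ∀ z : ∀ i, E i, (∀ i j, ζ i j (z j) (z i)) → ∀ a : A,
      (∀ i j, ζ i j ((z j) <• q j a) ((z i) <• q i a)) := by
    intro z hz a i j
    exact hζ.smulA i j a (z j) (z i) (hz i j)
  have hclosedG : IsClosed {z : ∀ i, E i | ∀ i j, ζ i j (z j) (z i)} := by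
    refine isClosed_of_closure_subset ?_
    intro z hzcl i j
    apply hGC
    intro ε hε
    rw [Metric.mem_closure_iff] at hzcl
    obtain ⟨x, hxG, hxd⟩ := hzcl ε hε
    refine ⟨x j, x i, hxG i j, ?_, ?_⟩
    · have h1 : ‖x j - z j‖ ≤ dist x z := by
        rw [← dist_eq_norm]; exact dist_le_pi_dist x z j
      have h2 : dist x z < ε := by rw [dist_comm]; exact hxd
      exact lt_of_le_of_lt h1 h2
    · have h1 : ‖x i - z i‖ ≤ dist x z := by
        rw [← dist_eq_norm]; exact dist_le_pi_dist x z i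
      have h2 : dist x z < ε := by rw [dist_comm]; exact hxd
      exact lt_of_le_of_lt h1 h2
  have hzeroG : (0 : ∀ i, E i) ∈ {z : ∀ i, E i | ∀ i j, ζ i j (z j) (z i)} := by
    intro i j
    simpa using hG0 i j
  have hqle : ∀ (i : Fin n) (a : A), ‖q i a‖ ≤ ‖a‖ := fun i a =>
    NonUnitalStarAlgHom.norm_apply_le (q i) a
  -- approximate Chinese remainder theorem
  have hCRT : ∀ (a : Fin n → A), (∀ i j, a i - a j ∈ (J i ⊔ J j : TwoSidedIdeal A)) →
      ∀ ε > 0, ∃ c : A, ∀ i, ‖q i (c - a i)‖ ≤ ε := by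
    intro a hcompat
    suffices hs : ∀ s : Finset (Fin n), ∀ ε > 0, ∃ c : A, ∀ i ∈ s, ‖q i (c - a i)‖ ≤ ε by
      intro ε hε
      obtain ⟨c, hc⟩ := hs Finset.univ ε hε
      exact ⟨c, fun i => hc i (Finset.mem_univ i)⟩
    intro s
    induction s using Finset.induction_on with
    | empty => exact fun ε hε => ⟨0, fun i hi => absurd hi (Finset.notMem_empty i)⟩
    | @insert m s hm IH =>
      intro ε hε
      set ε' : ℝ := min (ε / (4*n+4)) 1 with hε'def
      have hε'pos : 0 < ε' := lt_min (by positivity) one_pos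
      have hε'le1 : ε' ≤ 1 := min_le_right _ _
      have hε'leε : ε' ≤ ε / (4*n+4) := min_le_left _ _
      have hdiv : (4*(n:ℝ)+4)*(ε/(4*(n:ℝ)+4)) = ε := by
        field_simp
      obtain ⟨c, hc⟩ := IH ε' hε'pos
      set b : B m := q m (c - a m) with hbdef
      have hYex : ∀ i ∈ s, ∃ y : A, q i y = 0 ∧ ‖b - q m y‖ ≤ ε' := by
        intro i hi
        obtain ⟨d, hd0, hdle⟩ := exists_ker_dist_le (q i) (c - a i)
        obtain ⟨y1, hy1, w1, hw1, hsum⟩ := TwoSidedIdeal.mem_sup.mp (hcompat i m)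
        refine ⟨d + y1, ?_, ?_⟩
        · rw [map_add, hd0, (hq_ker i y1).2 hy1, add_zero]
        · have hw1' : q m w1 = 0 := (hq_ker m w1).2 hw1
          have hsum' : w1 = a i - a m - y1 := by rw [← hsum]; abel
          have he : (c - a m) - (d + y1) = ((c - a i) - d) + w1 := by
            rw [hsum']; abel
          rw [hbdef, ← map_sub, he, map_add, hw1', add_zero]
          calc ‖q m ((c - a i) - d)‖ ≤ ‖(c - a i) - d‖ := hqle m _
            _ ≤ ‖q i (c - a i)‖ := hdle
            _ ≤ ε' := hc i hi
      set δ : ℝ := ε'^8 with hδdef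
      have hδpos : 0 < δ := by positivity
      have hsqrtδ : Real.sqrt δ = ε'^4 := by
        have he : δ = (ε'^4)^2 := by rw [hδdef]; ring
        rw [he, Real.sqrt_sq (by positivity)]
      have hID : ∀ s' : Finset (Fin n), s' ⊆ s → ∃ d : A,
          (∀ i ∈ s', q i d = 0) ∧ ‖b - q m d‖ ≤ (s'.card : ℝ) * (3*ε') := by
        intro s'
        induction s' using Finset.induction_on with
        | empty =>
          intro _
          refine ⟨c - a m, fun i hi => absurd hi (Finset.notMem_empty i), ?_⟩
          rw [hbdef]
          simp
        | @insert t s'' ht IH2 =>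
          intro hsub
          have hts : t ∈ s := hsub (Finset.mem_insert_self t s'')
          have hsub' : s'' ⊆ s := fun i hi => hsub (Finset.mem_insert_of_mem hi)
          obtain ⟨d'', hd''0, hd''b⟩ := IH2 hsub'
          obtain ⟨y, hy0, hyb⟩ := hYex t hts
          have hysa : IsSelfAdjoint (star y * y) := .star_mul_self y
          set u : A := cfcₙ (gfun δ) (star y * y) with hu
          have hmap : ∀ k : Fin n, q k u = cfcₙ (gfun δ) (q k (star y * y)) := fun k =>
             NonUnitalStarAlgHom.map_cfcₙ (q k) (gfun δ) _ (gfun_cont δ).continuousOn (gfun_zero δ)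
               (nsahom_continuous (q k)) hysa (hysa.map (q k))
          have htu : q t u = 0 := by
            rw [hmap t, map_mul, map_star, hy0]
            simpa using cfcn_zero_of (gfun δ) (gfun_zero δ)
          set c₀ : B m := q m y with hc₀def
          have hmu : q m u = cfcₙ (gfun δ) (star c₀ * c₀) := by
            rw [hmap m, map_mul, map_star]
          have hv1 : ‖q m u‖ ≤ 1 := by
            rw [hmu]
            exact norm_cfcₙ_le fun tt _ => by
              rw [Real.norm_eq_abs, abs_of_nonneg (gfun_nonneg hδpos tt)]
              exact gfun_le_one tt
          have hcv : ‖c₀ - c₀ * q m u‖ ≤ ε' := by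
            rw [hmu]
            have h1 := mul_approx c₀ (gfun δ) (gfun_cont δ) (gfun_zero δ)
              (fun tt => gfun_bound hδpos tt)
            rw [hsqrtδ] at h1
            have h2 : ‖c₀ - c₀ * cfcₙ (gfun δ) (star c₀ * c₀)‖ ≤ ε'^2 := by
              nlinarith [norm_nonneg (c₀ - c₀ * cfcₙ (gfun δ) (star c₀ * c₀)), hε'pos]
            nlinarith [hε'pos, hε'le1]
          have hbv : ‖b - b * q m u‖ ≤ 3 * ε' := by
            have he : b - b * q m u = (b - c₀) + (c₀ - c₀ * q m u) + (c₀ - b) * q m u := by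
              noncomm_ring
            have h3 : ‖(c₀ - b) * q m u‖ ≤ ‖c₀ - b‖ * ‖q m u‖ := norm_mul_le _ _
            have h4 : ‖c₀ - b‖ ≤ ε' := by rw [norm_sub_rev]; exact hyb
            have h5 : ‖c₀ - b‖ * ‖q m u‖ ≤ ε' * 1 :=
              mul_le_mul h4 hv1 (norm_nonneg _) hε'pos.le
            calc ‖b - b * q m u‖
                ≤ ‖b - c₀‖ + ‖c₀ - c₀ * q m u‖ + ‖(c₀ - b) * q m u‖ := by
                  rw [he]; exact norm_add₃_le
              _ ≤ 3 * ε' := by nlinarith [hyb]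
          refine ⟨d'' * u, ?_, ?_⟩
          · intro i hi
            rcases Finset.mem_insert.mp hi with rfl | hi'
            · rw [map_mul, htu, mul_zero]
            · rw [map_mul, hd''0 i hi', zero_mul]
          · have he2 : b - q m (d'' * u) = (b - b * q m u) + (b - q m d'') * q m u := by
              rw [map_mul]; noncomm_ring
            have h7 : ‖(b - q m d'') * q m u‖ ≤ (s''.card : ℝ) * (3*ε') := by
              calc ‖(b - q m d'') * q m u‖ ≤ ‖b - q m d''‖ * ‖q m u‖ := norm_mul_le _ _
                _ ≤ ((s''.card : ℝ) * (3*ε')) * 1 :=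
                    mul_le_mul hd''b hv1 (norm_nonneg _) (by positivity)
                _ = (s''.card : ℝ) * (3*ε') := mul_one _
            rw [Finset.card_insert_of_notMem ht]
            push_cast
            calc ‖b - q m (d'' * u)‖
                ≤ ‖b - b * q m u‖ + ‖(b - q m d'') * q m u‖ := by
                  rw [he2]; exact norm_add_le _ _
              _ ≤ 3*ε' + (s''.card : ℝ) * (3*ε') := add_le_add hbv h7
              _ = ((s''.card : ℝ) + 1) * (3*ε') := by ring
      obtain ⟨d, hd0, hdb⟩ := hID s (Finset.Subset.refl s)
      refine ⟨c - d, ?_⟩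
      intro i hi
      rcases Finset.mem_insert.mp hi with rfl | hi'
      · have hcard : (s.card : ℝ) ≤ (n : ℝ) := by
          have h := Finset.card_le_univ s
          rw [Fintype.card_fin] at h
          exact_mod_cast h
        have he : (c - d) - a i = (c - a i) - d := by abel
        have h3n : (0:ℝ) ≤ 3*(n:ℝ) := by positivity
        calc ‖q i ((c - d) - a i)‖ = ‖b - q i d‖ := by
              rw [he, map_sub, ← hbdef]
          _ ≤ (s.card : ℝ) * (3*ε') := hdb
          _ ≤ (n:ℝ) * (3*ε') := mul_le_mul_of_nonneg_right hcard (by positivity)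
          _ ≤ ε := by nlinarith [mul_le_mul_of_nonneg_left hε'leε h3n, hε.le]
      · have he : (c - d) - a i = (c - a i) - d := by abel
        have h8 : q i ((c - d) - a i) = q i (c - a i) := by
          rw [he, map_sub, hd0 i hi', sub_zero]
        rw [h8]
        refine le_trans (hc i hi') (le_trans hε'leε ?_)
        exact div_le_self hε.le (by nlinarith [Nat.cast_nonneg (α := ℝ) n])
  -- exact solutions from approximate ones (closed range)
  have hrange : ∀ bb : ∀ i, B i, (∀ ε > 0, ∃ a : A, ∀ i, ‖q i a - bb i‖ ≤ ε) →
      ∃ a : A, ∀ i, q i a = bb i := by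
    intro bb happ
    have hcl : bb ∈ closure (Set.range (PiHom q)) := by
      rw [Metric.mem_closure_iff]
      intro ε hε
      obtain ⟨a, ha⟩ := happ (ε/2) (by linarith)
      refine ⟨PiHom q a, Set.mem_range_self a, ?_⟩
      rw [dist_comm, dist_eq_norm]
      have h9 : ‖PiHom q a - bb‖ ≤ ε/2 := by
        rw [pi_norm_le_iff_of_nonneg (by linarith)]
        intro i
        exact ha i
      linarith
    have hcls : IsClosed (Set.range (PiHom q)) :=
      ((NonUnitalStarAlgHom.isometry (PiHom q) hΦinj).isClosedEmbedding).isClosed_range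
    rw [hcls.closure_eq] at hcl
    obtain ⟨a, ha⟩ := hcl
    exact ⟨a, fun i => congrFun ha i⟩
  -- part (b): existence and uniqueness of the glued inner product
  have hbex : ∀ z z' : ∀ i, E i, (∀ i j, ζ i j (z j) (z i)) → (∀ i j, ζ i j (z' j) (z' i)) →
      ∃ a : A, ∀ i, q i a = (inner (B i) (z i) (z' i) : B i) := by
    intro z z' hz hz'
    choose aa haa using fun i => hq_surj i (inner (B i) (z i) (z' i) : B i)
    have hcompat : ∀ i j, aa i - aa j ∈ (J i ⊔ J j : TwoSidedIdeal A) := fun i j =>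
      hζ.unitary i j (z j) (z' j) (z i) (z' i) (hz i j) (hz' i j) (aa i) (aa j) (haa i) (haa j)
    apply hrange
    intro ε hε
    obtain ⟨c, hc⟩ := hCRT aa hcompat ε hε
    refine ⟨c, fun i => ?_⟩
    rw [← haa i, ← map_sub]
    exact hc i
  have hbuniq : ∀ z z' : ∀ i, E i, (∀ i j, ζ i j (z j) (z i)) → (∀ i j, ζ i j (z' j) (z' i)) →
      ∃! a : A, ∀ i, q i a = (inner (B i) (z i) (z' i) : B i) := by
    intro z z' hz hz'
    obtain ⟨a, ha⟩ := hbex z z' hz hz'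
    exact ⟨a, ha, fun y hy => hinj y a fun i => (hy i).trans (ha i).symm⟩
  -- the pairing P
  have hPex : ∀ z z' : ∀ i, E i, ∃ a : A,
      ((∀ i j, ζ i j (z j) (z i)) → (∀ i j, ζ i j (z' j) (z' i)) →
        ∀ i, q i a = (inner (B i) (z i) (z' i) : B i)) := by
    intro z z'
    by_cases h : (∀ i j, ζ i j (z j) (z i)) ∧ (∀ i j, ζ i j (z' j) (z' i))
    · obtain ⟨a, ha⟩ := hbex z z' h.1 h.2
      exact ⟨a, fun _ _ => ha⟩
    · exact ⟨0, fun h1 h2 => absurd ⟨h1, h2⟩ h⟩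
  choose P hP using hPex
  have hPstar : ∀ z z' : ∀ i, E i, (∀ i j, ζ i j (z j) (z i)) → (∀ i j, ζ i j (z' j) (z' i)) →
      star (P z z') = P z' z := by
    intro z z' hz hz'
    refine hinj _ _ fun i => ?_
    rw [map_star, hP z z' hz hz' i, hP z' z hz' hz i, RightCStarModule.star_inner]
  have hPadd : ∀ z z' w : ∀ i, E i, (∀ i j, ζ i j (z j) (z i)) →
      (∀ i j, ζ i j (z' j) (z' i)) → (∀ i j, ζ i j (w j) (w i)) →
      P w (z + z') = P w z + P w z' := by
    intro z z' w hz hz' hw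
    refine hinj _ _ fun i => ?_
    rw [map_add, hP w (z + z') hw (haddG z z' hz hz') i, hP w z hw hz i, hP w z' hw hz' i]
    simp [RightCStarModule.inner_add_right]
  have hPmulA : ∀ z z' : ∀ i, E i, (∀ i j, ζ i j (z j) (z i)) →
      (∀ i j, ζ i j (z' j) (z' i)) → ∀ a : A,
      P z (fun i => (z' i) <• q i a) = P z z' * a := by
    intro z z' hz hz' a
    refine hinj _ _ fun i => ?_
    rw [map_mul, hP z (fun i => (z' i) <• q i a) hz (hsmulAG z' hz' a) i, hP z z' hz hz' i]
    simp [RightCStarModule.inner_op_smul_right]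
  have hPsmulC : ∀ z z' : ∀ i, E i, (∀ i j, ζ i j (z j) (z i)) →
      (∀ i j, ζ i j (z' j) (z' i)) → ∀ c : ℂ,
      P z (c • z') = c • P z z' := by
    intro z z' hz hz' c
    refine hinj _ _ fun i => ?_
    rw [map_smul, hP z (c • z') hz (hsmulCG z' hz' c) i, hP z z' hz hz' i]
    simp [RightCStarModule.inner_smul_right_complex]
  have hzeroG' : ∀ i j, ζ i j ((0 : ∀ i, E i) j) ((0 : ∀ i, E i) i) := hzeroG
  have hPpos : ∀ z : ∀ i, E i, (∀ i j, ζ i j (z j) (z i)) →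
      ∃ b : A, P z z = star b * b := by
    intro z hz
    set aP := P z z with haP
    have hsaP : IsSelfAdjoint aP := by
      rw [IsSelfAdjoint, haP]
      exact hPstar z z hz hz
    have hcontneg : Continuous (·⁻ : ℝ → ℝ) := by
      have he : (·⁻ : ℝ → ℝ) = fun t => -t ⊔ 0 := by
        funext t; exact negPart_def t
      rw [he]; fun_prop
    have hnegP : aP⁻ = 0 := by
      refine hinj _ _ fun i => ?_
      rw [map_zero]
      have h1 : q i (aP⁻) = (q i aP)⁻ := by
        rw [CFC.negPart_def, CFC.negPart_def]
        exact NonUnitalStarAlgHom.map_cfcₙ (q i) _ aP hcontneg.continuousOn (by simp)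
          (nsahom_continuous (q i)) hsaP (hsaP.map (q i))
      rw [h1]
      refine (CFC.negPart_eq_zero_iff (q i aP) (hsaP.map (q i))).2 ?_
      rw [hP z z hz hz i]
      exact RightCStarModule.inner_self_nonneg
    have hcontf : Continuous (fun t : ℝ => Real.sqrt (t ⊔ 0)) := by fun_prop
    refine ⟨cfcₙ (fun t : ℝ => Real.sqrt (t ⊔ 0)) aP, ?_⟩
    have hbsa : IsSelfAdjoint (cfcₙ (fun t : ℝ => Real.sqrt (t ⊔ 0)) aP) :=
      cfcₙ_predicate _ aP
    rw [hbsa.star_eq]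
    have h2 := cfcₙ_mul (a := aP) (f := fun t : ℝ => Real.sqrt (t ⊔ 0))
      (g := fun t : ℝ => Real.sqrt (t ⊔ 0)) (hf := hcontf.continuousOn) (hf0 := by simp)
      (hg := hcontf.continuousOn) (hg0 := by simp)
    rw [← h2]
    have hfun : (fun t : ℝ => Real.sqrt (t ⊔ 0) * Real.sqrt (t ⊔ 0)) = (·⁺ : ℝ → ℝ) := by
      funext t
      rw [Real.mul_self_sqrt (le_max_right _ _)]
      exact (posPart_def t).symm
    rw [hfun, ← CFC.posPart_def]
    have h4 := CFC.posPart_sub_negPart aP hsaP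
    rw [hnegP, sub_zero] at h4
    exact h4.symm
  have hPdef : ∀ z : ∀ i, E i, (∀ i j, ζ i j (z j) (z i)) → (P z z = 0 ↔ z = 0) := by
    intro z hz
    constructor
    · intro h0
      funext i
      have h1 := hP z z hz hz i
      rw [h0, map_zero] at h1
      exact (RightCStarModule.inner_self (A := B i)).1 h1.symm
    · rintro rfl
      refine hinj _ _ fun i => ?_
      rw [map_zero, hP 0 0 hzeroG' hzeroG' i]
      simp
  have hPnorm : ∀ z : ∀ i, E i, (∀ i j, ζ i j (z j) (z i)) → ‖P z z‖ = ‖z‖ ^ 2 := by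
    intro z hz
    have h3 : ∀ i, ‖q i (P z z)‖₊ = ‖z i‖₊^2 := by
      intro i
      have hsq := RightCStarModule.norm_sq_eq (A := B i) (x := z i)
      have hnn : ‖q i (P z z)‖ = ‖z i‖^2 := by rw [hP z z hz hz i, ← hsq]
      ext
      push_cast
      exact hnn
    have hsup : (Finset.univ.sup fun i => ‖q i (P z z)‖₊)
        = (Finset.univ.sup fun i => ‖z i‖₊)^2 := by
      refine le_antisymm ?_ ?_
      · refine Finset.sup_le fun i _ => ?_
        rw [h3 i]
        exact pow_le_pow_left₀ (zero_le (α := NNReal)) (Finset.le_sup (f := fun i => ‖z i‖₊) (Finset.mem_univ i)) 2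
      · obtain ⟨i₀, -, hi₀⟩ := Finset.exists_mem_eq_sup Finset.univ Finset.univ_nonempty
          (fun i => ‖z i‖₊)
        rw [hi₀, ← h3 i₀]
        exact Finset.le_sup (f := fun i => ‖q i (P z z)‖₊) (Finset.mem_univ i₀)
    have h5 : ‖P z z‖ = ‖PiHom q (P z z)‖ := hnormΦ _
    rw [h5, Pi.norm_def, Pi.norm_def]
    have h6 : (Finset.univ.sup fun b_1 => ‖PiHom q (P z z) b_1‖₊)
        = (Finset.univ.sup fun i => ‖q i (P z z)‖₊) := rfl
    rw [h6, hsup]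
    push_cast
    ring
  exact ⟨⟨hzeroG, haddG, hnegG, hsmulCG, hsmulAG, hclosedG⟩, hbuniq,
    P, hP, hPstar, hPadd, hPmulA, hPsmulC, hPpos, hPdef, hPnorm⟩
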